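/- For b ∈ {0,1,2,3,4,6}, the function x ↦ P_{b+1}(x)/P_b(x) − x/(b+1) is monotonically increasing on (0,∞); for b = 5 this function is monotonically increasing on [0.776, ∞). Equivalently, the polynomial P_{b+1}′(x)·P_b(x) − P_{b+1}(x)·P_b′(x) − (1/(b+1))·P_b(x)² is nonnegative on the respective intervals. -/

import Mathlib

set_option maxHeartbeats 2000000

open Polynomial Finset

/-- The polynomials `P n` defined by `P 0 = 1` and
`n * P n = X * ∑_{k=1}^n σ(k) * P (n-k)`, i.e. the coefficients of
`∏ (1 - q^j)^{-x} = ∑ P_n(x) q^n`. -/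
noncomputable def P : ℕ → Polynomial ℝ
  | 0 => 1
  | n + 1 => ((n + 1 : ℝ)⁻¹) • (X * ∑ k ∈ Finset.range (n + 1),
      ((∑ d ∈ (k + 1).divisors, d : ℕ) : ℝ) • P (n - k))

/-- `Δ a b = P (a-1) * P (b+1) - P a * P b`. -/
noncomputable def Δ (a b : ℕ) : Polynomial ℝ :=
  P (a - 1) * P (b + 1) - P a * P b

lemma sig1 : (∑ d ∈ Nat.divisors 1, d) = 1 := by decide
lemma sig2 : (∑ d ∈ Nat.divisors 2, d) = 3 := by decide
lemma sig3 : (∑ d ∈ Nat.divisors 3, d) = 4 := by decide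
lemma sig4 : (∑ d ∈ Nat.divisors 4, d) = 7 := by decide
lemma sig5 : (∑ d ∈ Nat.divisors 5, d) = 6 := by decide
lemma sig6 : (∑ d ∈ Nat.divisors 6, d) = 12 := by decide
lemma sig7 : (∑ d ∈ Nat.divisors 7, d) = 8 := by decide

lemma hP0 : P 0 = 1 := by rw [P]
lemma hP1 : P 1 = X := by simp [P]
lemma eP0 (x : ℝ) : (P 0).eval x = 1 := by rw [hP0]; simp
lemma eP1 (x : ℝ) : (P 1).eval x = x := by rw [hP1]; simp

lemma eP2 (x : ℝ) : (P 2).eval x = 3/2*x + 1/2*x^2 := by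
  rw [show P 2 = P (1+1) from rfl, P, Finset.sum_range_succ, Finset.sum_range_succ]
  norm_num [sig1, sig2, eP0, eP1]; ring

lemma eP3 (x : ℝ) : (P 3).eval x = 4/3*x + 3/2*x^2 + 1/6*x^3 := by
  rw [show P 3 = P (2+1) from rfl, P, Finset.sum_range_succ, Finset.sum_range_succ,
    Finset.sum_range_succ]
  norm_num [sig1, sig2, sig3, eP0, eP1, eP2]; ring

lemma eP4 (x : ℝ) : (P 4).eval x = 7/4*x + 59/24*x^2 + 3/4*x^3 + 1/24*x^4 := by
  rw [show (4:ℕ) = 3+1 from rfl, P, Finset.sum_range_succ, Finset.sum_range_succ,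
    Finset.sum_range_succ, Finset.sum_range_succ]
  norm_num [sig1, sig2, sig3, sig4, eP0, eP1, eP2, eP3]; ring

lemma eP5 (x : ℝ) : (P 5).eval x = 6/5*x + 15/4*x^2 + 43/24*x^3 + 1/4*x^4 + 1/120*x^5 := by
  rw [show P 5 = P (4+1) from rfl, P, Finset.sum_range_succ, Finset.sum_range_succ,
    Finset.sum_range_succ, Finset.sum_range_succ, Finset.sum_range_succ]
  norm_num [sig1, sig2, sig3, sig4, sig5, eP0, eP1, eP2, eP3, eP4]; ring

lemma eP6 (x : ℝ) : (P 6).eval x = 2*x + 1697/360*x^2 + 55/16*x^3 + 113/144*x^4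
    + 1/16*x^5 + 1/720*x^6 := by
  rw [show (6:ℕ) = 5+1 from rfl, P, Finset.sum_range_succ, Finset.sum_range_succ,
    Finset.sum_range_succ, Finset.sum_range_succ, Finset.sum_range_succ, Finset.sum_range_succ]
  norm_num [sig1, sig2, sig3, sig4, sig5, sig6, eP0, eP1, eP2, eP3, eP4, eP5]; ring

lemma eP7 (x : ℝ) : (P 7).eval x = 8/7*x + 92/15*x^2 + 2021/360*x^3 + 89/48*x^4
    + 35/144*x^5 + 1/80*x^6 + 1/5040*x^7 := by
  rw [show P 7 = P (6+1) from rfl, P, Finset.sum_range_succ, Finset.sum_range_succ,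
    Finset.sum_range_succ, Finset.sum_range_succ, Finset.sum_range_succ, Finset.sum_range_succ,
    Finset.sum_range_succ]
  norm_num [sig1, sig2, sig3, sig4, sig5, sig6, sig7, eP0, eP1, eP2, eP3, eP4, eP5, eP6]; ring

lemma hP2 : P 2 = C (3/2) * X + C (1/2) * X^2 :=
  Polynomial.funext fun x => by rw [eP2]; norm_num
lemma hP3 : P 3 = C (4/3) * X + C (3/2) * X^2 + C (1/6) * X^3 :=
  Polynomial.funext fun x => by rw [eP3]; norm_num
lemma hP4 : P 4 = C (7/4) * X + C (59/24) * X^2 + C (3/4) * X^3 + C (1/24) * X^4 :=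
  Polynomial.funext fun x => by rw [eP4]; norm_num
lemma hP5 : P 5 = C (6/5) * X + C (15/4) * X^2 + C (43/24) * X^3 + C (1/4) * X^4
    + C (1/120) * X^5 := Polynomial.funext fun x => by rw [eP5]; norm_num
lemma hP6 : P 6 = C 2 * X + C (1697/360) * X^2 + C (55/16) * X^3 + C (113/144) * X^4
    + C (1/16) * X^5 + C (1/720) * X^6 := Polynomial.funext fun x => by rw [eP6]; norm_num
lemma hP7 : P 7 = C (8/7) * X + C (92/15) * X^2 + C (2021/360) * X^3 + C (89/48) * X^4
    + C (35/144) * X^5 + C (1/80) * X^6 + C (1/5040) * X^7 :=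
  Polynomial.funext fun x => by rw [eP7]; norm_num


/-- General monotonicity criterion for `N/D - x/m` from nonnegativity of
`N' D - N D' - (1/m) D²`. -/
lemma mono_aux (N D : Polynomial ℝ) (m : ℝ) {s : Set ℝ} (hs : Convex ℝ s)
    (hD : ∀ x ∈ s, 0 < D.eval x)
    (hQ : ∀ x ∈ interior s,
      0 ≤ (derivative N * D - N * derivative D).eval x - 1 / m * (D.eval x) ^ 2) :
    MonotoneOn (fun x : ℝ => N.eval x / D.eval x - x / m) s := by
  apply monotoneOn_of_deriv_nonneg hs
  · exact (N.continuousOn.div D.continuousOn fun x hx => (hD x hx).ne').sub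
      ((continuous_id'.div_const m).continuousOn)
  · intro x hx
    have hx' : x ∈ s := interior_subset hx
    exact (((N.hasDerivAt x).div (D.hasDerivAt x) (hD x hx').ne').sub
      ((hasDerivAt_id' x).div_const m)).differentiableAt.differentiableWithinAt
  · intro x hx
    have hx' : x ∈ s := interior_subset hx
    have h1 : HasDerivAt (fun x : ℝ => N.eval x / D.eval x - x / m)
        (((derivative N).eval x * D.eval x - N.eval x * (derivative D).eval x) / (D.eval x) ^ 2
          - 1 / m) x :=
      ((N.hasDerivAt x).div (D.hasDerivAt x) (hD x hx').ne').sub ((hasDerivAt_id' x).div_const m)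
    rw [h1.deriv]
    have h2 := hQ x hx
    simp only [eval_sub, eval_mul] at h2
    have hD2 : 0 < (D.eval x) ^ 2 := pow_pos (hD x hx') 2
    rw [sub_nonneg, le_div_iff₀ hD2]
    nlinarith [h2]

theorem stmt16 :
    (∀ b : ℕ, b = 0 ∨ b = 1 ∨ b = 2 ∨ b = 3 ∨ b = 4 ∨ b = 6 →
      MonotoneOn (fun x : ℝ => (P (b + 1)).eval x / (P b).eval x - x / (b + 1))
        (Set.Ioi 0) ∧
      ∀ x : ℝ, 0 < x →
        0 ≤ (Polynomial.derivative (P (b + 1)) * P b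
              - P (b + 1) * Polynomial.derivative (P b)).eval x
            - (1 / (b + 1 : ℝ)) * ((P b).eval x) ^ 2) ∧
    (MonotoneOn (fun x : ℝ => (P 6).eval x / (P 5).eval x - x / 6)
        (Set.Ici (0.776 : ℝ)) ∧
      ∀ x : ℝ, (0.776 : ℝ) ≤ x →
        0 ≤ (Polynomial.derivative (P 6) * P 5
              - P 6 * Polynomial.derivative (P 5)).eval x
            - (1 / 6 : ℝ) * ((P 5).eval x) ^ 2) := by
  constructor
  · rintro b (rfl | rfl | rfl | rfl | rfl | rfl)
    · refine ⟨mono_aux _ _ _ (convex_Ioi 0) ?_ ?_, ?_⟩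
      · intro x hx
        norm_num [hP0]
      · intro x hx
        rw [interior_Ioi, Set.mem_Ioi] at hx
        norm_num [hP0, hP1]
      · intro x hx
        norm_num [hP0, hP1]
    · refine ⟨mono_aux _ _ _ (convex_Ioi 0) ?_ ?_, ?_⟩
      · intro x hx
        norm_num [hP1]
        exact hx
      · intro x hx
        rw [interior_Ioi, Set.mem_Ioi] at hx
        norm_num [hP1, hP2]
        nlinarith [sq_nonneg x, hx.le]
      · intro x hx
        norm_num [hP1, hP2]
        nlinarith [sq_nonneg x, hx.le]
    · refine ⟨mono_aux _ _ _ (convex_Ioi 0) ?_ ?_, ?_⟩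
      · intro x hx
        norm_num [hP2]
        nlinarith [sq_nonneg x, Set.mem_Ioi.mp hx]
      · intro x hx
        rw [interior_Ioi, Set.mem_Ioi] at hx
        norm_num [hP2, hP3]
        nlinarith [hx.le, sq_nonneg x, pow_nonneg hx.le 2, pow_nonneg hx.le 3,
          pow_nonneg hx.le 4]
      · intro x hx
        norm_num [hP2, hP3]
        nlinarith [hx.le, sq_nonneg x, pow_nonneg hx.le 2, pow_nonneg hx.le 3,
          pow_nonneg hx.le 4]
    · refine ⟨mono_aux _ _ _ (convex_Ioi 0) ?_ ?_, ?_⟩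
      · intro x hx
        rw [Set.mem_Ioi] at hx
        norm_num [hP3]
        nlinarith [hx, pow_pos hx 2, pow_pos hx 3]
      · intro x hx
        rw [interior_Ioi, Set.mem_Ioi] at hx
        norm_num [hP3, hP4]
        nlinarith [hx.le, pow_nonneg hx.le 2, pow_nonneg hx.le 3, pow_nonneg hx.le 4,
          pow_nonneg hx.le 5, pow_nonneg hx.le 6]
      · intro x hx
        norm_num [hP3, hP4]
        nlinarith [hx.le, pow_nonneg hx.le 2, pow_nonneg hx.le 3, pow_nonneg hx.le 4,
          pow_nonneg hx.le 5, pow_nonneg hx.le 6]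
    · refine ⟨mono_aux _ _ _ (convex_Ioi 0) ?_ ?_, ?_⟩
      · intro x hx
        rw [Set.mem_Ioi] at hx
        norm_num [hP4]
        nlinarith [hx, pow_pos hx 2, pow_pos hx 3, pow_pos hx 4]
      · intro x hx
        rw [interior_Ioi, Set.mem_Ioi] at hx
        norm_num [hP4, hP5]
        nlinarith [hx.le, pow_nonneg hx.le 2, pow_nonneg hx.le 3, pow_nonneg hx.le 4,
          pow_nonneg hx.le 5, pow_nonneg hx.le 6, pow_nonneg hx.le 7, pow_nonneg hx.le 8]
      · intro x hx
        norm_num [hP4, hP5]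
        nlinarith [hx.le, pow_nonneg hx.le 2, pow_nonneg hx.le 3, pow_nonneg hx.le 4,
          pow_nonneg hx.le 5, pow_nonneg hx.le 6, pow_nonneg hx.le 7, pow_nonneg hx.le 8]
    · refine ⟨mono_aux _ _ _ (convex_Ioi 0) ?_ ?_, ?_⟩
      · intro x hx
        rw [Set.mem_Ioi] at hx
        norm_num [hP6]
        nlinarith [hx, pow_pos hx 2, pow_pos hx 3, pow_pos hx 4, pow_pos hx 5, pow_pos hx 6]
      · intro x hx
        rw [interior_Ioi, Set.mem_Ioi] at hx
        norm_num [hP6, hP7]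
        nlinarith [hx.le, pow_nonneg hx.le 2, pow_nonneg hx.le 3, pow_nonneg hx.le 4,
          pow_nonneg hx.le 5, pow_nonneg hx.le 6, pow_nonneg hx.le 7, pow_nonneg hx.le 8,
          pow_nonneg hx.le 9, pow_nonneg hx.le 10]
      · intro x hx
        norm_num [hP6, hP7]
        nlinarith [hx.le, pow_nonneg hx.le 2, pow_nonneg hx.le 3, pow_nonneg hx.le 4,
          pow_nonneg hx.le 5, pow_nonneg hx.le 6, pow_nonneg hx.le 7, pow_nonneg hx.le 8,
          pow_nonneg hx.le 9, pow_nonneg hx.le 10]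
  · refine ⟨mono_aux _ _ _ (convex_Ici _) ?_ ?_, ?_⟩
    · intro x hx
      simp only [Set.mem_Ici] at hx
      have hx' : (0:ℝ) < x := lt_of_lt_of_le (by norm_num) hx
      norm_num [hP5]
      nlinarith [hx', pow_pos hx' 2, pow_pos hx' 3, pow_pos hx' 4, pow_pos hx' 5]
    · intro x hx
      rw [interior_Ici] at hx
      have hx' : (0.776 : ℝ) ≤ x := le_of_lt hx
      have ht : (0:ℝ) ≤ x - 0.776 := by linarith [hx']
      norm_num [hP5, hP6]
      nlinarith [ht, pow_nonneg ht 2, pow_nonneg ht 3, pow_nonneg ht 4, pow_nonneg ht 5,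
        pow_nonneg ht 6, pow_nonneg ht 7, pow_nonneg ht 8]
    · intro x hx
      have ht : (0:ℝ) ≤ x - 0.776 := by linarith [hx]
      norm_num [hP5, hP6]
      nlinarith [ht, pow_nonneg ht 2, pow_nonneg ht 3, pow_nonneg ht 4, pow_nonneg ht 5,
        pow_nonneg ht 6, pow_nonneg ht 7, pow_nonneg ht 8]
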